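/- Let d, n, L ≥ 1, let Σ be a positive semidefinite d×d real matrix, and let f : ℝ^d → ℝ be a measurable function of at most polynomial growth (|f(x)| ≤ C(1+‖x‖)^k for some C, k). Draw x_1, …, x_{n+1} i.i.d. from the Gaussian N(0, Σ) on ℝ^d and set y_i = f(x_i). Form the prompt Z ∈ ℝ^{(D+1)×(n+1)} with D ≥ d+1, whose i-th column is ((1, x_i, 0_{D−d−1}), y_i) for i ≤ n and whose last column is ((1, x_{n+1}, 0_{D−d−1}), 0). Then for every L-layer linear Transformer with arbitrary weights (P^(ℓ), Q^(ℓ))_{ℓ=1}^L, its prediction ŷ (the (D+1, n+1) entry of the output Z^(L)) satisfies E[(ŷ + f(x_{n+1}))²] ≥ inf_{α ∈ ℝ, β ∈ ℝ^d} E[(⟨x_{n+1}, β⟩ + α + f(x_{n+1}))²]. -/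

import Mathlib

open MeasureTheory ProbabilityTheory Matrix

noncomputable section

/-- Product of i.i.d. standard Gaussians on `ℝ^d`. -/
def stdGaussianPi (d : ℕ) : Measure (Fin d → ℝ) :=
  Measure.pi fun _ => gaussianReal 0 1

/-- The mask `M = diag(I_n, 0)`. -/
def attnMask (n : ℕ) : Matrix (Fin (n + 1)) (Fin (n + 1)) ℝ :=
  Matrix.diagonal fun i => if i = Fin.last n then 0 else 1

/-- A linear self-attention layer with weights `P, Q`:
`attn(Z) = Z + (1/n) P Z M (Zᵀ Q Z)`. -/
def attn (D n : ℕ) (P Q : Matrix (Fin (D + 1)) (Fin (D + 1)) ℝ)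
    (Z : Matrix (Fin (D + 1)) (Fin (n + 1)) ℝ) : Matrix (Fin (D + 1)) (Fin (n + 1)) ℝ :=
  Z + (n : ℝ)⁻¹ • (P * Z * attnMask n * (Zᵀ * Q * Z))

/-- An `L`-layer linear Transformer: composition of LSA layers, weights given as a list. -/
def TFlin (D n : ℕ)
    (wts : List (Matrix (Fin (D + 1)) (Fin (D + 1)) ℝ × Matrix (Fin (D + 1)) (Fin (D + 1)) ℝ))
    (Z : Matrix (Fin (D + 1)) (Fin (n + 1)) ℝ) : Matrix (Fin (D + 1)) (Fin (n + 1)) ℝ :=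
  wts.foldl (fun W pq => attn D n pq.1 pq.2 W) Z

/-- The prompt matrix: column `i ≤ n` is `((1, x_i, 0_{D-d-1}), y_i)`, and the last
column is `((1, x_{n+1}, 0_{D-d-1}), 0)`. -/
def promptX (d D n : ℕ) (x : Fin (n + 1) → Fin d → ℝ) (y : Fin n → ℝ) :
    Matrix (Fin (D + 1)) (Fin (n + 1)) ℝ :=
  Matrix.of fun i j =>
    if h0 : (i : ℕ) = 0 then 1
    else if h1 : (i : ℕ) ≤ d then x j ⟨(i : ℕ) - 1, by omega⟩
    else if (i : ℕ) = D then (if hj : (j : ℕ) < n then y ⟨(j : ℕ), hj⟩ else 0)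
    else 0

-- auxiliary
def stepW (D n : ℕ) (P Q : Matrix (Fin (D + 1)) (Fin (D + 1)) ℝ)
    (W : Matrix (Fin (D + 1)) (Fin (n + 1)) ℝ) : Matrix (Fin (D + 1)) (Fin (n + 1)) ℝ :=
  W + (n : ℝ)⁻¹ • ((P * W * Wᵀ * Q) * W)

def layerMat (D n : ℕ) (P Q : Matrix (Fin (D + 1)) (Fin (D + 1)) ℝ)
    (W : Matrix (Fin (D + 1)) (Fin (n + 1)) ℝ) : Matrix (Fin (D + 1)) (Fin (D + 1)) ℝ :=
  1 + (n : ℝ)⁻¹ • (P * W * Wᵀ * Q)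

def colMat (D n : ℕ) :
    List (Matrix (Fin (D + 1)) (Fin (D + 1)) ℝ × Matrix (Fin (D + 1)) (Fin (D + 1)) ℝ) →
    Matrix (Fin (D + 1)) (Fin (n + 1)) ℝ → Matrix (Fin (D + 1)) (Fin (D + 1)) ℝ
  | [], _ => 1
  | pq :: l, W => colMat D n l (stepW D n pq.1 pq.2 W) * layerMat D n pq.1 pq.2 W

lemma attnMask_mul_self (n : ℕ) : attnMask n * attnMask n = attnMask n := by
  have h : ∀ i : Fin (n+1), ((if i = Fin.last n then (0:ℝ) else 1) * (if i = Fin.last n then 0 else 1)) = (if i = Fin.last n then 0 else 1) := by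
    intro i; split <;> ring
  simp only [attnMask, Matrix.diagonal_mul_diagonal, h]

lemma attnMask_transpose (n : ℕ) : (attnMask n)ᵀ = attnMask n := by
  simp [attnMask, Matrix.diagonal_transpose]

lemma ZMZt (D n : ℕ) (Z : Matrix (Fin (D + 1)) (Fin (n + 1)) ℝ) :
    Z * attnMask n * Zᵀ = (Z * attnMask n) * (Z * attnMask n)ᵀ := by
  rw [Matrix.transpose_mul, attnMask_transpose]
  conv_lhs => rw [← attnMask_mul_self n]
  simp only [Matrix.mul_assoc]

lemma attn_mul_mask (D n : ℕ) (P Q : Matrix (Fin (D + 1)) (Fin (D + 1)) ℝ)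
    (Z : Matrix (Fin (D + 1)) (Fin (n + 1)) ℝ) :
    attn D n P Q Z * attnMask n = stepW D n P Q (Z * attnMask n) := by
  unfold attn stepW
  rw [Matrix.add_mul, Matrix.smul_mul]
  congr 2
  have h : P * Z * attnMask n * (Zᵀ * Q * Z) * attnMask n
      = P * (Z * attnMask n * Zᵀ) * Q * (Z * attnMask n) := by
    simp only [Matrix.mul_assoc]
  rw [h, ZMZt]
  simp only [Matrix.mul_assoc]

lemma attn_last (D n : ℕ) (P Q : Matrix (Fin (D + 1)) (Fin (D + 1)) ℝ)
    (Z : Matrix (Fin (D + 1)) (Fin (n + 1)) ℝ) (i : Fin (D + 1)) :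
    attn D n P Q Z i (Fin.last n)
      = (layerMat D n P Q (Z * attnMask n)).mulVec (fun r => Z r (Fin.last n)) i := by
  unfold attn layerMat
  have h1 : P * Z * attnMask n * (Zᵀ * Q * Z)
      = (P * (Z * attnMask n) * (Z * attnMask n)ᵀ * Q) * Z := by
    calc P * Z * attnMask n * (Zᵀ * Q * Z)
        = (P * (Z * attnMask n * Zᵀ) * Q) * Z := by simp only [Matrix.mul_assoc]
      _ = (P * (Z * attnMask n) * (Z * attnMask n)ᵀ * Q) * Z := by
          rw [ZMZt]; simp only [Matrix.mul_assoc]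
  rw [h1]
  simp only [Matrix.add_apply, Matrix.smul_apply, Matrix.add_mulVec, Matrix.smul_mulVec,
    Matrix.one_mulVec, Pi.add_apply, Pi.smul_apply, smul_eq_mul]
  congr 1

lemma TFlin_last (D n : ℕ)
    (l : List (Matrix (Fin (D + 1)) (Fin (D + 1)) ℝ × Matrix (Fin (D + 1)) (Fin (D + 1)) ℝ)) :
    ∀ (Z : Matrix (Fin (D + 1)) (Fin (n + 1)) ℝ) (i : Fin (D + 1)),
    TFlin D n l Z i (Fin.last n)
      = (colMat D n l (Z * attnMask n)).mulVec (fun r => Z r (Fin.last n)) i := by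
  induction l with
  | nil => intro Z i; simp [TFlin, colMat, Matrix.one_mulVec]
  | cons pq l ih =>
    intro Z i
    have : TFlin D n (pq :: l) Z = TFlin D n l (attn D n pq.1 pq.2 Z) := rfl
    rw [this, ih, attn_mul_mask]
    have hcol : (fun r => attn D n pq.1 pq.2 Z r (Fin.last n))
        = (layerMat D n pq.1 pq.2 (Z * attnMask n)).mulVec (fun r => Z r (Fin.last n)) := by
      funext r; exact attn_last D n pq.1 pq.2 Z r
    rw [hcol, Matrix.mulVec_mulVec]
    rfl

/-- context matrix as a function of the first `n` inputs only -/
def ctxM (d D n : ℕ) (f : (Fin d → ℝ) → ℝ) (u : Fin n → Fin d → ℝ) :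
    Matrix (Fin (D + 1)) (Fin (n + 1)) ℝ :=
  Matrix.of fun i j =>
    if hj : j = Fin.last n then 0
    else
      if h0 : (i : ℕ) = 0 then 1
      else if h1 : (i : ℕ) ≤ d then u ⟨(j : ℕ), Fin.val_lt_last hj⟩ ⟨(i : ℕ) - 1, by omega⟩
      else if (i : ℕ) = D then f (u ⟨(j : ℕ), Fin.val_lt_last hj⟩)
      else 0

def qvec (d D : ℕ) (z : Fin d → ℝ) : Fin (D + 1) → ℝ := fun r =>
  if h0 : (r : ℕ) = 0 then 1
  else if h1 : (r : ℕ) ≤ d then z ⟨(r : ℕ) - 1, by omega⟩ else 0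

lemma prompt_mask (d D n : ℕ) (f : (Fin d → ℝ) → ℝ) (x : Fin (n + 1) → Fin d → ℝ) :
    promptX d D n x (fun i => f (x i.castSucc)) * attnMask n
      = ctxM d D n f (fun j => x j.castSucc) := by
  ext i j
  rw [attnMask, Matrix.mul_diagonal]
  by_cases hj : j = Fin.last n
  · simp [hj, ctxM]
  · simp only [hj, if_neg, ite_false, mul_one, ctxM, promptX, Matrix.of_apply, dif_neg hj]
    by_cases h0 : (i : ℕ) = 0
    · simp [h0]
    · by_cases h1 : (i : ℕ) ≤ d
      · simp only [dif_neg h0, dif_pos h1]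
        congr 1
      · simp only [dif_neg h0, dif_neg h1]
        by_cases h2 : (i : ℕ) = D
        · simp only [h2, if_pos rfl, dif_pos (Fin.val_lt_last hj)]
          congr 1
        · simp [h2]

lemma prompt_last_col (d D n : ℕ) (x : Fin (n + 1) → Fin d → ℝ) (y : Fin n → ℝ)
    (r : Fin (D + 1)) :
    promptX d D n x y r (Fin.last n) = qvec d D (x (Fin.last n)) r := by
  unfold promptX qvec
  simp only [Matrix.of_apply]
  by_cases h0 : (r : ℕ) = 0
  · simp [h0]
  · by_cases h1 : (r : ℕ) ≤ d
    · simp [h0, h1]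
    · simp only [dif_neg h0, dif_neg h1]
      split
      · simp [Fin.last]
      · rfl

lemma mulVec_qvec (d D : ℕ) (hD : d + 1 ≤ D) (w : Fin (D + 1) → ℝ) (z : Fin d → ℝ) :
    (∑ r : Fin (D + 1), w r * qvec d D z r)
      = z ⬝ᵥ (fun j : Fin d => w ⟨(j : ℕ) + 1, by omega⟩) + w 0 := by
  have key : ∀ r : Fin (D + 1), w r * qvec d D z r
      = (if r = 0 then w 0 else 0)
        + ∑ j : Fin d, (if r = (⟨(j : ℕ) + 1, by omega⟩ : Fin (D + 1)) then z j * w r else 0) := by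
    intro r
    by_cases h0 : (r : ℕ) = 0
    · have hr : r = 0 := by ext; simpa using h0
      subst hr
      have : ∀ j : Fin d, (if (0 : Fin (D+1)) = (⟨(j : ℕ) + 1, by omega⟩ : Fin (D + 1)) then z j * w 0 else 0) = 0 := by
        intro j
        rw [if_neg]
        intro h
        have := congrArg Fin.val h
        simp at this
      simp [qvec, this]
    · have hr0 : ¬ r = 0 := by intro h; exact h0 (by simp [h])
      rw [if_neg hr0]
      by_cases h1 : (r : ℕ) ≤ d
      · have hjr : r = (⟨((r : ℕ) - 1 : ℕ) + 1, by omega⟩ : Fin (D + 1)) := by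
          ext; simp; omega
        rw [Finset.sum_eq_single (⟨(r : ℕ) - 1, by omega⟩ : Fin d)]
        · simp only [qvec, dif_neg h0, dif_pos h1]
          rw [if_pos]
          · ring
          · ext; simp; omega
        · intro j _ hj
          rw [if_neg]
          intro h
          apply hj
          have := congrArg Fin.val h
          simp at this
          ext; simp; omega
        · intro h; exact absurd (Finset.mem_univ _) h
      · have : ∀ j : Fin d, (if r = (⟨(j : ℕ) + 1, by omega⟩ : Fin (D + 1)) then z j * w r else 0) = 0 := by
          intro j
          rw [if_neg]
          intro h
          have := congrArg Fin.val h
          simp at this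
          omega
        simp [qvec, dif_neg h0, dif_neg h1, this, hr0]
  rw [Finset.sum_congr rfl (fun r _ => key r), Finset.sum_add_distrib, Finset.sum_comm]
  simp only [Finset.sum_ite_eq', Finset.mem_univ, if_true]
  rw [add_comm]
  congr 1

/-- polynomially bounded and measurable -/
def PolyBnd {N d : ℕ} (h : (Fin N → Fin d → ℝ) → ℝ) : Prop :=
  Measurable h ∧ ∃ c : ℝ, ∃ m : ℕ, ∀ x, |h x| ≤ c * ∏ i : Fin N, (1 + ‖x i‖) ^ m

namespace PolyBnd

variable {N d : ℕ}

lemma prod_pos (x : Fin N → Fin d → ℝ) (m : ℕ) : 0 < ∏ i : Fin N, (1 + ‖x i‖) ^ m :=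
  Finset.prod_pos fun i _ => pow_pos (by positivity) m

lemma one_le_base (x : Fin N → Fin d → ℝ) (i : Fin N) : (1:ℝ) ≤ 1 + ‖x i‖ :=
  le_add_of_nonneg_right (norm_nonneg _)

lemma prod_one_le' (x : Fin N → Fin d → ℝ) (m : ℕ) (s : Finset (Fin N)) :
    1 ≤ ∏ i ∈ s, (1 + ‖x i‖) ^ m := by
  calc (1:ℝ) = ∏ i ∈ s, 1 := by simp
    _ ≤ _ := Finset.prod_le_prod (by intros; norm_num) (fun i _ => one_le_pow₀ (one_le_base x i))

lemma prod_one_le (x : Fin N → Fin d → ℝ) (m : ℕ) : 1 ≤ ∏ i : Fin N, (1 + ‖x i‖) ^ m :=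
  prod_one_le' x m Finset.univ

lemma single_le (x : Fin N → Fin d → ℝ) (j : Fin N) (m : ℕ) :
    (1 + ‖x j‖) ^ m ≤ ∏ i : Fin N, (1 + ‖x i‖) ^ m := by
  rw [← Finset.mul_prod_erase Finset.univ _ (Finset.mem_univ j)]
  exact le_mul_of_one_le_right (by positivity) (prod_one_le' x m _)

lemma prod_mono {m m' : ℕ} (h : m ≤ m') (x : Fin N → Fin d → ℝ) :
    ∏ i : Fin N, (1 + ‖x i‖) ^ m ≤ ∏ i : Fin N, (1 + ‖x i‖) ^ m' :=
  Finset.prod_le_prod (fun i _ => by positivity)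
    (fun i _ => pow_le_pow_right₀ (one_le_base x i) h)

lemma const (a : ℝ) : PolyBnd (fun _ : Fin N → Fin d → ℝ => a) :=
  ⟨measurable_const, |a|, 0, fun x => by simp⟩

lemma add {g h : (Fin N → Fin d → ℝ) → ℝ} (hg : PolyBnd g) (hh : PolyBnd h) :
    PolyBnd (g + h) := by
  obtain ⟨mg, cg, ng, hbg⟩ := hg
  obtain ⟨mh, ch, nh, hbh⟩ := hh
  refine ⟨mg.add mh, |cg| + |ch|, max ng nh, fun x => ?_⟩
  have h1 : |g x| ≤ |cg| * ∏ i, (1 + ‖x i‖) ^ max ng nh := by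
    refine (hbg x).trans ?_
    calc cg * ∏ i, (1 + ‖x i‖) ^ ng
        ≤ |cg| * ∏ i, (1 + ‖x i‖) ^ ng :=
          mul_le_mul_of_nonneg_right (le_abs_self cg) (prod_pos x ng).le
      _ ≤ |cg| * ∏ i, (1 + ‖x i‖) ^ max ng nh :=
          mul_le_mul_of_nonneg_left (prod_mono (le_max_left ng nh) x) (abs_nonneg cg)
  have h2 : |h x| ≤ |ch| * ∏ i, (1 + ‖x i‖) ^ max ng nh := by
    refine (hbh x).trans ?_
    calc ch * ∏ i, (1 + ‖x i‖) ^ nh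
        ≤ |ch| * ∏ i, (1 + ‖x i‖) ^ nh :=
          mul_le_mul_of_nonneg_right (le_abs_self ch) (prod_pos x nh).le
      _ ≤ |ch| * ∏ i, (1 + ‖x i‖) ^ max ng nh :=
          mul_le_mul_of_nonneg_left (prod_mono (le_max_right ng nh) x) (abs_nonneg ch)
  calc |(g + h) x| ≤ |g x| + |h x| := abs_add_le _ _
    _ ≤ |cg| * ∏ i, (1 + ‖x i‖) ^ max ng nh + |ch| * ∏ i, (1 + ‖x i‖) ^ max ng nh := by
        exact add_le_add h1 h2
    _ = (|cg| + |ch|) * ∏ i, (1 + ‖x i‖) ^ max ng nh := by ring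

lemma mul {g h : (Fin N → Fin d → ℝ) → ℝ} (hg : PolyBnd g) (hh : PolyBnd h) :
    PolyBnd (fun x => g x * h x) := by
  obtain ⟨mg, cg, ng, hbg⟩ := hg
  obtain ⟨mh, ch, nh, hbh⟩ := hh
  refine ⟨mg.mul mh, |cg| * |ch|, ng + nh, fun x => ?_⟩
  have h1 : |g x| ≤ |cg| * ∏ i, (1 + ‖x i‖) ^ ng :=
    (hbg x).trans (mul_le_mul_of_nonneg_right (le_abs_self cg) (prod_pos x ng).le)
  have h2 : |h x| ≤ |ch| * ∏ i, (1 + ‖x i‖) ^ nh :=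
    (hbh x).trans (mul_le_mul_of_nonneg_right (le_abs_self ch) (prod_pos x nh).le)
  calc |g x * h x| = |g x| * |h x| := abs_mul _ _
    _ ≤ (|cg| * ∏ i, (1 + ‖x i‖) ^ ng) * (|ch| * ∏ i, (1 + ‖x i‖) ^ nh) := by
        exact mul_le_mul h1 h2 (abs_nonneg _) (by positivity)
    _ = (|cg| * |ch|) * ∏ i, (1 + ‖x i‖) ^ (ng + nh) := by
        simp_rw [pow_add, Finset.prod_mul_distrib]; ring

lemma smul (a : ℝ) {h : (Fin N → Fin d → ℝ) → ℝ} (hh : PolyBnd h) :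
    PolyBnd (fun x => a * h x) := (const a).mul hh

lemma sum {ι : Type*} (s : Finset ι) (g : ι → (Fin N → Fin d → ℝ) → ℝ)
    (hg : ∀ i ∈ s, PolyBnd (g i)) : PolyBnd (fun x => ∑ i ∈ s, g i x) := by
  classical
  induction s using Finset.induction_on with
  | empty => simpa using const 0
  | insert a s hnotmem ih =>
    simp only [Finset.sum_insert hnotmem]
    exact (hg a (Finset.mem_insert_self a s)).add
      (ih fun i hi => hg i (Finset.mem_insert_of_mem hi))

/-- the coordinate functions are polynomially bounded -/
lemma proj (j : Fin N) (l : Fin d) : PolyBnd (fun x : Fin N → Fin d → ℝ => x j l) := by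
  refine ⟨(measurable_pi_apply l).comp (measurable_pi_apply j), 1, 1, fun x => ?_⟩
  rw [one_mul]
  calc |x j l| ≤ ‖x j‖ := by
        rw [← Real.norm_eq_abs]; exact norm_le_pi_norm (x j) l
    _ ≤ (1 + ‖x j‖) ^ 1 := by rw [pow_one]; linarith [norm_nonneg (x j)]
    _ ≤ ∏ i, (1 + ‖x i‖) ^ 1 := single_le x j 1

/-- composition with a polynomial-growth function applied to one coordinate block -/
lemma compGrowth {f : (Fin d → ℝ) → ℝ} (hf : Measurable f) (C : ℝ) (k : ℕ)
    (hgrowth : ∀ v, |f v| ≤ C * (1 + ‖v‖) ^ k) (j : Fin N) :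
    PolyBnd (fun x : Fin N → Fin d → ℝ => f (x j)) := by
  refine ⟨hf.comp (measurable_pi_apply j), max C 0, k, fun x => ?_⟩
  calc |f (x j)| ≤ C * (1 + ‖x j‖) ^ k := hgrowth (x j)
    _ ≤ max C 0 * (1 + ‖x j‖) ^ k :=
        mul_le_mul_of_nonneg_right (le_max_left _ _) (by positivity)
    _ ≤ max C 0 * ∏ i, (1 + ‖x i‖) ^ k :=
        mul_le_mul_of_nonneg_left (single_le x j k) (le_max_right _ _)

end PolyBnd

/-- all entries polynomially bounded, for matrix-valued functions -/
def PolyBndM {N d : ℕ} {I J : Type*} (W : (Fin N → Fin d → ℝ) → Matrix I J ℝ) : Prop :=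
  ∀ i j, PolyBnd fun x => W x i j

namespace PolyBndM

variable {N d : ℕ} {I J K : Type*}

lemma const (B : Matrix I J ℝ) : PolyBndM (fun _ : Fin N → Fin d → ℝ => B) :=
  fun i j => PolyBnd.const (B i j)

lemma add {W V : (Fin N → Fin d → ℝ) → Matrix I J ℝ} (hW : PolyBndM W) (hV : PolyBndM V) :
    PolyBndM (fun x => W x + V x) := fun i j => by
  have := (hW i j).add (hV i j)
  simpa [Pi.add_def] using this

lemma smul (a : ℝ) {W : (Fin N → Fin d → ℝ) → Matrix I J ℝ} (hW : PolyBndM W) :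
    PolyBndM (fun x => a • W x) := fun i j => by
  simpa using PolyBnd.smul a (hW i j)

lemma transpose {W : (Fin N → Fin d → ℝ) → Matrix I J ℝ} (hW : PolyBndM W) :
    PolyBndM (fun x => (W x)ᵀ) := fun i j => hW j i

lemma mul [Fintype J] {W : (Fin N → Fin d → ℝ) → Matrix I J ℝ}
    {V : (Fin N → Fin d → ℝ) → Matrix J K ℝ} (hW : PolyBndM W) (hV : PolyBndM V) :
    PolyBndM (fun x => W x * V x) := fun i j => by
  have : (fun x => (W x * V x) i j) = fun x => ∑ l : J, W x i l * V x l j := by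
    funext x; simp [Matrix.mul_apply]
  rw [this]
  exact PolyBnd.sum Finset.univ _ (fun l _ => (hW i l).mul (hV l j))

end PolyBndM

section Moments

open Real

lemma int_poly_gauss (m : ℕ) {b : ℝ} (hb : 0 < b) :
    Integrable (fun t : ℝ => (1 + |t|) ^ m * Real.exp (-b * t ^ 2)) := by
  have hint : Integrable (fun t : ℝ =>
      2 ^ m * ∑ j ∈ Finset.range (m + 1),
        (m.choose j : ℝ) * (t ^ (2 * j) * Real.exp (-b * t ^ 2))) := by
    refine Integrable.const_mul ?_ _
    refine integrable_finset_sum _ fun j _ => Integrable.const_mul ?_ _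
    have hcast : (-1 : ℝ) < ((2 * j : ℕ) : ℝ) := by
      have := Nat.cast_nonneg (α := ℝ) (2 * j); linarith
    have := integrable_rpow_mul_exp_neg_mul_sq hb (s := ((2 * j : ℕ) : ℝ)) hcast
    simpa only [Real.rpow_natCast] using this
  refine hint.mono' ?_ ?_
  · exact ((continuous_const.add continuous_abs).pow m |>.mul
      ((continuous_const.mul (continuous_pow 2)).rexp)).aestronglyMeasurable
  · refine Filter.Eventually.of_forall fun t => ?_
    have h1 : (0:ℝ) ≤ Real.exp (-b * t ^ 2) := (Real.exp_pos _).le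
    have h2 : (1 + |t|) ≤ 2 * (1 + t ^ 2) := by nlinarith [abs_nonneg t, sq_abs t, sq_nonneg (|t| - 1)]
    have h3 : (1 + |t|) ^ m ≤ 2 ^ m * (1 + t ^ 2) ^ m := by
      calc (1 + |t|) ^ m ≤ (2 * (1 + t ^ 2)) ^ m :=
            pow_le_pow_left₀ (by positivity) h2 m
        _ = 2 ^ m * (1 + t ^ 2) ^ m := mul_pow 2 _ m
    have h4 : (1 + t ^ 2) ^ m = ∑ j ∈ Finset.range (m + 1), (m.choose j : ℝ) * t ^ (2 * j) := by
      rw [add_comm, add_pow]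
      refine Finset.sum_congr rfl fun j hj => ?_
      rw [one_pow, pow_mul, mul_one]
      ring
    rw [Real.norm_eq_abs, abs_mul, abs_of_nonneg h1, abs_of_nonneg (by positivity)]
    calc (1 + |t|) ^ m * Real.exp (-b * t ^ 2)
        ≤ 2 ^ m * (1 + t ^ 2) ^ m * Real.exp (-b * t ^ 2) :=
          mul_le_mul_of_nonneg_right h3 h1
      _ = 2 ^ m * ∑ j ∈ Finset.range (m + 1),
            (m.choose j : ℝ) * (t ^ (2 * j) * Real.exp (-b * t ^ 2)) := by
          rw [h4, mul_assoc]
          congr 1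
          rw [Finset.sum_mul]
          exact Finset.sum_congr rfl fun j _ => by ring

lemma gauss_moment (m : ℕ) : Integrable (fun t : ℝ => (1 + |t|) ^ m) (gaussianReal 0 1) := by
  rw [gaussianReal_of_var_ne_zero 0 one_ne_zero]
  rw [integrable_withDensity_iff (measurable_gaussianPDF 0 1)
    (Filter.Eventually.of_forall fun t => by simp [gaussianPDF_def, ENNReal.ofReal_lt_top])]
  have : (fun t : ℝ => (1 + |t|) ^ m * (gaussianPDF 0 1 t).toReal)
      = fun t : ℝ => (Real.sqrt (2 * Real.pi))⁻¹ * ((1 + |t|) ^ m * Real.exp (-(1/2 : ℝ) * t ^ 2)) := by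
    funext t
    rw [gaussianPDF_def, ENNReal.toReal_ofReal (gaussianPDFReal_nonneg 0 1 t)]
    unfold gaussianPDFReal
    push_cast
    ring_nf
  rw [this]
  exact (int_poly_gauss m (by norm_num)).const_mul _

lemma integrable_pi_prod {E : Type*} [MeasurableSpace E] (μ : Measure E) [IsProbabilityMeasure μ] :
    ∀ (N : ℕ) (g : E → ℝ), Integrable g μ →
      Integrable (fun x : Fin N → E => ∏ i, g (x i)) (Measure.pi fun _ : Fin N => μ) := by
  intro N
  induction N with
  | zero => intro g hg; simp only [Finset.univ_eq_empty, Finset.prod_empty]; exact integrable_const _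
  | succ N ih =>
    intro g hg
    have hmp := (measurePreserving_piFinSuccAbove (fun _ : Fin (N + 1) => μ) 0).symm
    rw [← hmp.integrable_comp_emb (MeasurableEquiv.measurableEmbedding _)]
    have key : (fun x : Fin (N + 1) → E => ∏ i, g (x i)) ∘
        (MeasurableEquiv.piFinSuccAbove (fun _ : Fin (N + 1) => E) 0).symm
        = fun p : E × (Fin N → E) => g p.1 * ∏ i, g (p.2 i) := by
      funext p
      simp only [Function.comp_apply, MeasurableEquiv.piFinSuccAbove_symm_apply]
      rw [Fin.prod_univ_succ]
      simp [Fin.insertNthEquiv, Fin.insertNth_zero, Fin.zero_succAbove]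
    rw [key]
    exact (hg.mul_prod (ih g hg))

end Moments

section MomentsPi

lemma one_add_sum_le_prod {ι : Type*} (s : Finset ι) (a : ι → ℝ) (ha : ∀ i ∈ s, 0 ≤ a i) :
    1 + ∑ i ∈ s, a i ≤ ∏ i ∈ s, (1 + a i) := by
  classical
  induction s using Finset.induction_on with
  | empty => simp
  | insert j s hnotmem ih =>
    rw [Finset.sum_insert hnotmem, Finset.prod_insert hnotmem]
    have haj : 0 ≤ a j := ha j (Finset.mem_insert_self j s)
    have hsum : 0 ≤ ∑ i ∈ s, a i := Finset.sum_nonneg fun i hi => ha i (Finset.mem_insert_of_mem hi)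
    have ihs : 1 + ∑ i ∈ s, a i ≤ ∏ i ∈ s, (1 + a i) :=
      ih fun i hi => ha i (Finset.mem_insert_of_mem hi)
    nlinarith

lemma one_add_norm_le_prod {d : ℕ} (v : Fin d → ℝ) :
    1 + ‖v‖ ≤ ∏ i : Fin d, (1 + |v i|) := by
  have h1 : ‖v‖ ≤ ∑ i, |v i| := by
    rw [pi_norm_le_iff_of_nonneg (Finset.sum_nonneg fun i _ => abs_nonneg _)]
    intro i
    rw [Real.norm_eq_abs]
    exact Finset.single_le_sum (fun i _ => abs_nonneg (v i)) (Finset.mem_univ i)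
  calc 1 + ‖v‖ ≤ 1 + ∑ i, |v i| := by linarith
    _ ≤ ∏ i, (1 + |v i|) := one_add_sum_le_prod _ _ fun i _ => abs_nonneg _

lemma moments_pi (d m : ℕ) :
    Integrable (fun v : Fin d → ℝ => (1 + ‖v‖) ^ m)
      (Measure.pi fun _ : Fin d => gaussianReal 0 1) := by
  refine (integrable_pi_prod (gaussianReal 0 1) d (fun t => (1 + |t|) ^ m)
    (gauss_moment m)).mono' ?_ ?_
  · exact ((continuous_const.add continuous_norm).pow m).aestronglyMeasurable
  · refine Filter.Eventually.of_forall fun v => ?_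
    rw [Real.norm_eq_abs, abs_of_nonneg (by positivity)]
    calc (1 + ‖v‖) ^ m ≤ (∏ i, (1 + |v i|)) ^ m :=
          pow_le_pow_left₀ (by positivity) (one_add_norm_le_prod v) m
      _ = ∏ i, (1 + |v i|) ^ m := by rw [Finset.prod_pow]

lemma continuous_mulVec {d : ℕ} (A : Matrix (Fin d) (Fin d) ℝ) : Continuous A.mulVec :=
  continuous_const.matrix_mulVec continuous_id

lemma moments_map (d m : ℕ) (A : Matrix (Fin d) (Fin d) ℝ) :
    Integrable (fun v : Fin d → ℝ => (1 + ‖v‖) ^ m)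
      ((Measure.pi fun _ : Fin d => gaussianReal 0 1).map A.mulVec) := by
  set cA : ℝ := ∑ i : Fin d, ∑ j : Fin d, |A i j| with hcA
  have hcA0 : 0 ≤ cA := Finset.sum_nonneg fun i _ => Finset.sum_nonneg fun j _ => abs_nonneg _
  have hAv : ∀ z : Fin d → ℝ, ‖A.mulVec z‖ ≤ cA * ‖z‖ := by
    intro z
    rw [pi_norm_le_iff_of_nonneg (by positivity)]
    intro i
    rw [Real.norm_eq_abs, Matrix.mulVec, dotProduct]
    calc |∑ j, A i j * z j| ≤ ∑ j, |A i j * z j| := Finset.abs_sum_le_sum_abs _ _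
      _ ≤ ∑ j, |A i j| * ‖z‖ := by
          refine Finset.sum_le_sum fun j _ => ?_
          rw [abs_mul]
          refine mul_le_mul_of_nonneg_left ?_ (abs_nonneg _)
          rw [← Real.norm_eq_abs]
          exact norm_le_pi_norm z j
      _ = (∑ j, |A i j|) * ‖z‖ := by rw [Finset.sum_mul]
      _ ≤ cA * ‖z‖ := by
          refine mul_le_mul_of_nonneg_right ?_ (norm_nonneg _)
          exact Finset.single_le_sum (f := fun i => ∑ j, |A i j|)
            (fun i _ => Finset.sum_nonneg fun j _ => abs_nonneg _) (Finset.mem_univ i)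
  rw [integrable_map_measure (g := fun v : Fin d → ℝ => (1 + ‖v‖) ^ m)
    ((continuous_const.add continuous_norm).pow m).aestronglyMeasurable
    (continuous_mulVec A).measurable.aemeasurable]
  refine ((moments_pi d m).const_mul ((1 + cA) ^ m)).mono' ?_ ?_
  · exact (((continuous_const.add continuous_norm).pow m).comp
      (continuous_mulVec A)).aestronglyMeasurable
  · refine Filter.Eventually.of_forall fun z => ?_
    rw [Function.comp_apply, Real.norm_eq_abs, abs_of_nonneg (by positivity)]
    have h2 : 1 + ‖A.mulVec z‖ ≤ (1 + cA) * (1 + ‖z‖) := by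
      have := hAv z
      nlinarith [norm_nonneg z]
    calc (1 + ‖A.mulVec z‖) ^ m ≤ ((1 + cA) * (1 + ‖z‖)) ^ m :=
          pow_le_pow_left₀ (by positivity) h2 m
      _ = (1 + cA) ^ m * (1 + ‖z‖) ^ m := mul_pow _ _ _

lemma integrable_polybnd {N d : ℕ} (A : Matrix (Fin d) (Fin d) ℝ)
    {h : (Fin N → Fin d → ℝ) → ℝ} (hPB : PolyBnd h) :
    Integrable h
      (Measure.pi fun _ : Fin N =>
        (Measure.pi fun _ : Fin d => gaussianReal 0 1).map A.mulVec) := by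
  obtain ⟨hm, c, m, hb⟩ := hPB
  have hprob : IsProbabilityMeasure ((Measure.pi fun _ : Fin d => gaussianReal 0 1).map A.mulVec) :=
    Measure.isProbabilityMeasure_map (continuous_mulVec A).measurable.aemeasurable
  refine ((integrable_pi_prod _ N (fun v => (1 + ‖v‖) ^ m) (moments_map d m A)).const_mul
    c).mono' hm.aestronglyMeasurable ?_
  refine Filter.Eventually.of_forall fun x => ?_
  rw [Real.norm_eq_abs]
  exact hb x

end MomentsPi

section Glue

/-- coefficient functions of the affine-in-query form of the transformer output -/
def aCoef (d D n : ℕ) (f : (Fin d → ℝ) → ℝ)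
    (l : List (Matrix (Fin (D + 1)) (Fin (D + 1)) ℝ × Matrix (Fin (D + 1)) (Fin (D + 1)) ℝ))
    (u : Fin n → Fin d → ℝ) : ℝ :=
  colMat D n l (ctxM d D n f u) (Fin.last D) 0

def bCoef (d D n : ℕ) (hD : d + 1 ≤ D) (f : (Fin d → ℝ) → ℝ)
    (l : List (Matrix (Fin (D + 1)) (Fin (D + 1)) ℝ × Matrix (Fin (D + 1)) (Fin (D + 1)) ℝ))
    (u : Fin n → Fin d → ℝ) : Fin d → ℝ := fun j =>
  colMat D n l (ctxM d D n f u) (Fin.last D) ⟨(j : ℕ) + 1, by omega⟩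

lemma Tval (d D n : ℕ) (hD : d + 1 ≤ D) (f : (Fin d → ℝ) → ℝ)
    (l : List (Matrix (Fin (D + 1)) (Fin (D + 1)) ℝ × Matrix (Fin (D + 1)) (Fin (D + 1)) ℝ))
    (x : Fin (n + 1) → Fin d → ℝ) :
    TFlin D n l (promptX d D n x fun i => f (x i.castSucc)) (Fin.last D) (Fin.last n)
      = (x (Fin.last n)) ⬝ᵥ bCoef d D n hD f l (fun j => x j.castSucc)
        + aCoef d D n f l (fun j => x j.castSucc) := by
  rw [TFlin_last, prompt_mask]
  have hq : (fun r => promptX d D n x (fun i => f (x i.castSucc)) r (Fin.last n))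
      = qvec d D (x (Fin.last n)) := funext fun r => prompt_last_col d D n x _ r
  rw [hq]
  exact mulVec_qvec d D hD _ _

lemma PB_ctx {d D n : ℕ} {f : (Fin d → ℝ) → ℝ} (hf : Measurable f) (C : ℝ) (k : ℕ)
    (hgrowth : ∀ v, |f v| ≤ C * (1 + ‖v‖) ^ k) :
    PolyBndM (fun u : Fin n → Fin d → ℝ => ctxM d D n f u) := by
  intro i j
  simp only [ctxM, Matrix.of_apply]
  by_cases hj : j = Fin.last n
  · simp only [dif_pos hj]; exact PolyBnd.const 0
  · simp only [dif_neg hj]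
    by_cases h0 : (i : ℕ) = 0
    · simp only [dif_pos h0]; exact PolyBnd.const 1
    · simp only [dif_neg h0]
      by_cases h1 : (i : ℕ) ≤ d
      · simp only [dif_pos h1]; exact PolyBnd.proj _ _
      · simp only [dif_neg h1]
        by_cases h2 : (i : ℕ) = D
        · simp only [if_pos h2]; exact PolyBnd.compGrowth hf C k hgrowth _
        · simp only [if_neg h2]; exact PolyBnd.const 0

lemma PB_colMat {d D n N : ℕ} :
    ∀ (l : List (Matrix (Fin (D + 1)) (Fin (D + 1)) ℝ × Matrix (Fin (D + 1)) (Fin (D + 1)) ℝ))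
      {W : (Fin N → Fin d → ℝ) → Matrix (Fin (D + 1)) (Fin (n + 1)) ℝ},
      PolyBndM W → PolyBndM (fun x => colMat D n l (W x)) := by
  intro l
  induction l with
  | nil =>
    intro W hW
    exact PolyBndM.const (1 : Matrix (Fin (D + 1)) (Fin (D + 1)) ℝ)
  | cons pq l ih =>
    intro W hW
    have hcore : PolyBndM (fun x => pq.1 * W x * (W x)ᵀ * pq.2) :=
      (((PolyBndM.const pq.1).mul hW).mul hW.transpose).mul (PolyBndM.const pq.2)
    have hstep : PolyBndM (fun x => stepW D n pq.1 pq.2 (W x)) := by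
      unfold stepW
      exact hW.add (PolyBndM.smul _ (hcore.mul hW))
    have hlayer : PolyBndM (fun x => layerMat D n pq.1 pq.2 (W x)) := by
      unfold layerMat
      exact (PolyBndM.const 1).add (PolyBndM.smul _ hcore)
    exact (ih hstep).mul hlayer

lemma PolyBnd.comp_castSucc {n d : ℕ} {h : (Fin n → Fin d → ℝ) → ℝ} (hh : PolyBnd h) :
    PolyBnd (fun x : Fin (n + 1) → Fin d → ℝ => h (fun j => x j.castSucc)) := by
  obtain ⟨hm, c, m, hb⟩ := hh
  have hcm : Measurable (fun x : Fin (n + 1) → Fin d → ℝ => (fun j : Fin n => x j.castSucc)) :=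
    measurable_pi_lambda _ fun j => measurable_pi_apply _
  refine ⟨hm.comp hcm, max c 0, m, fun x => ?_⟩
  have hb' := hb (fun j => x j.castSucc)
  have step1 : ∏ j : Fin n, (1 + ‖x j.castSucc‖) ^ m ≤ ∏ i : Fin (n + 1), (1 + ‖x i‖) ^ m := by
    have himg : ∏ j : Fin n, (1 + ‖x j.castSucc‖) ^ m
        = ∏ i ∈ (Finset.univ : Finset (Fin n)).image Fin.castSucc, (1 + ‖x i‖) ^ m := by
      rw [Finset.prod_image (fun a _ b _ hab => Fin.castSucc_injective n hab)]
    rw [himg]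
    calc (∏ i ∈ (Finset.univ : Finset (Fin n)).image Fin.castSucc, (1 + ‖x i‖) ^ m)
        ≤ (∏ i ∈ Finset.univ \ (Finset.univ : Finset (Fin n)).image Fin.castSucc,
              (1 + ‖x i‖) ^ m)
            * ∏ i ∈ (Finset.univ : Finset (Fin n)).image Fin.castSucc, (1 + ‖x i‖) ^ m := by
          refine le_mul_of_one_le_left (Finset.prod_nonneg fun i _ => by positivity) ?_
          exact PolyBnd.prod_one_le' x m _
      _ = ∏ i : Fin (n + 1), (1 + ‖x i‖) ^ m :=
          Finset.prod_sdiff (Finset.subset_univ _)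
  calc |h fun j => x j.castSucc| ≤ c * ∏ j : Fin n, (1 + ‖x j.castSucc‖) ^ m := hb'
    _ ≤ max c 0 * ∏ j : Fin n, (1 + ‖x j.castSucc‖) ^ m :=
        mul_le_mul_of_nonneg_right (le_max_left _ _) (by positivity)
    _ ≤ max c 0 * ∏ i : Fin (n + 1), (1 + ‖x i‖) ^ m :=
        mul_le_mul_of_nonneg_left step1 (le_max_right _ _)

end Glue

lemma PolyBnd.add' {N d : ℕ} {g h : (Fin N → Fin d → ℝ) → ℝ} (hg : PolyBnd g) (hh : PolyBnd h) :
    PolyBnd (fun x => g x + h x) := hg.add hh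

theorem stmt0 (d n L D : ℕ) (hd : 1 ≤ d) (hn : 1 ≤ n) (hL : 1 ≤ L) (hD : d + 1 ≤ D)
    (Sig : Matrix (Fin d) (Fin d) ℝ) (hSig : Sig.PosSemidef)
    (A : Matrix (Fin d) (Fin d) ℝ) (hA : A * Aᵀ = Sig)
    (f : (Fin d → ℝ) → ℝ) (hf : Measurable f)
    (C : ℝ) (k : ℕ) (hgrowth : ∀ x, |f x| ≤ C * (1 + ‖x‖) ^ k)
    (wts : Fin L → Matrix (Fin (D + 1)) (Fin (D + 1)) ℝ × Matrix (Fin (D + 1)) (Fin (D + 1)) ℝ) :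
    (⨅ α : ℝ, ⨅ β : Fin d → ℝ,
        ∫ x : Fin (n + 1) → Fin d → ℝ,
          ((x (Fin.last n) ⬝ᵥ β) + α + f (x (Fin.last n))) ^ 2
          ∂(Measure.pi fun _ : Fin (n + 1) => (stdGaussianPi d).map A.mulVec))
      ≤ ∫ x : Fin (n + 1) → Fin d → ℝ,
          (TFlin D n (List.ofFn wts)
              (promptX d D n x fun i => f (x i.castSucc)) (Fin.last D) (Fin.last n)
            + f (x (Fin.last n))) ^ 2
          ∂(Measure.pi fun _ : Fin (n + 1) => (stdGaussianPi d).map A.mulVec) := by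
  classical
  set μ : Measure (Fin d → ℝ) := (stdGaussianPi d).map A.mulVec with hμdef
  haveI hprobμ : IsProbabilityMeasure μ := by
    haveI : IsProbabilityMeasure (stdGaussianPi d) := by
      unfold stdGaussianPi; infer_instance
    exact Measure.isProbabilityMeasure_map (continuous_mulVec A).measurable.aemeasurable
  set ν : Measure (Fin (n + 1) → Fin d → ℝ) := Measure.pi fun _ => μ with hνdef
  set ν' : Measure (Fin n → Fin d → ℝ) := Measure.pi fun _ => μ with hν'def
  set l := List.ofFn wts with hldef
  set aF : (Fin n → Fin d → ℝ) → ℝ := aCoef d D n f l with haF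
  set bF : (Fin n → Fin d → ℝ) → Fin d → ℝ := bCoef d D n hD f l with hbF
  -- the matrix of coefficients is polynomially bounded, as a function of the context
  have hPBB : PolyBndM (fun u : Fin n → Fin d → ℝ => colMat D n l (ctxM d D n f u)) :=
    PB_colMat l (PB_ctx hf C k hgrowth)
  have hPBa : PolyBnd aF := hPBB (Fin.last D) 0
  have hPBb : ∀ jj : Fin d, PolyBnd (fun u => bF u jj) := fun jj => hPBB (Fin.last D) _
  have haFm : Measurable aF := hPBa.1
  have hbFm : ∀ jj : Fin d, Measurable (fun u => bF u jj) := fun jj => (hPBb jj).1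
  -- structural identity
  have hT : ∀ x : Fin (n + 1) → Fin d → ℝ,
      TFlin D n l (promptX d D n x fun i => f (x i.castSucc)) (Fin.last D) (Fin.last n)
        = (x (Fin.last n)) ⬝ᵥ bF (fun j => x j.castSucc) + aF (fun j => x j.castSucc) :=
    fun x => Tval d D n hD f l x
  -- integrability of the RHS integrand
  have hPBf : PolyBnd (fun x : Fin (n + 1) → Fin d → ℝ => f (x (Fin.last n))) :=
    PolyBnd.compGrowth hf C k hgrowth _
  have hPBdot : PolyBnd (fun x : Fin (n + 1) → Fin d → ℝ =>
      (x (Fin.last n)) ⬝ᵥ bF (fun j => x j.castSucc)) := by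
    have hEq : (fun x : Fin (n + 1) → Fin d → ℝ =>
        (x (Fin.last n)) ⬝ᵥ bF (fun j => x j.castSucc))
        = fun x => ∑ jj : Fin d, x (Fin.last n) jj * bF (fun j => x j.castSucc) jj := rfl
    rw [hEq]
    exact PolyBnd.sum Finset.univ _ fun jj _ =>
      (PolyBnd.proj (Fin.last n) jj).mul ((hPBb jj).comp_castSucc)
  have hPBT : PolyBnd (fun x : Fin (n + 1) → Fin d → ℝ =>
      TFlin D n l (promptX d D n x fun i => f (x i.castSucc)) (Fin.last D) (Fin.last n)
        + f (x (Fin.last n))) := by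
    have hEq : (fun x : Fin (n + 1) → Fin d → ℝ =>
        TFlin D n l (promptX d D n x fun i => f (x i.castSucc)) (Fin.last D) (Fin.last n)
          + f (x (Fin.last n)))
        = fun x => ((x (Fin.last n)) ⬝ᵥ bF (fun j => x j.castSucc)
            + aF (fun j => x j.castSucc)) + f (x (Fin.last n)) := by
      funext x; rw [hT x]
    rw [hEq]
    exact (hPBdot.add' hPBa.comp_castSucc).add' hPBf
  have hPBsq : PolyBnd (fun x : Fin (n + 1) → Fin d → ℝ =>
      (TFlin D n l (promptX d D n x fun i => f (x i.castSucc)) (Fin.last D) (Fin.last n)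
        + f (x (Fin.last n))) ^ 2) := by
    have hEq : ∀ a : ℝ, a ^ 2 = a * a := fun a => sq a
    simp only [hEq]
    exact hPBT.mul hPBT
  have hInt : Integrable (fun x : Fin (n + 1) → Fin d → ℝ =>
      (TFlin D n l (promptX d D n x fun i => f (x i.castSucc)) (Fin.last D) (Fin.last n)
        + f (x (Fin.last n))) ^ 2) ν := integrable_polybnd A hPBsq
  -- transport to the product measure
  set e := MeasurableEquiv.piFinSuccAbove (fun _ : Fin (n + 1) => (Fin d → ℝ)) (Fin.last n)
    with hedef
  have hmp : MeasurePreserving e ν (μ.prod ν') :=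
    measurePreserving_piFinSuccAbove (fun _ : Fin (n + 1) => μ) (Fin.last n)
  set G : (Fin d → ℝ) × (Fin n → Fin d → ℝ) → ℝ :=
    fun p => (p.1 ⬝ᵥ bF p.2 + aF p.2 + f p.1) ^ 2 with hGdef
  have hex : ∀ x : Fin (n + 1) → Fin d → ℝ,
      e x = (x (Fin.last n), fun j => x j.castSucc) := by
    intro x
    have h1 : e x = (x (Fin.last n), fun j => x ((Fin.last n).succAbove j)) := rfl
    rw [h1]
    congr 1
    funext j
    rw [Fin.succAbove_last]
  have hcomp : ∀ x : Fin (n + 1) → Fin d → ℝ,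
      (TFlin D n l (promptX d D n x fun i => f (x i.castSucc)) (Fin.last D) (Fin.last n)
        + f (x (Fin.last n))) ^ 2 = G (e x) := by
    intro x
    rw [hex x, hGdef]
    simp only
    rw [hT x]
  have hIntG : Integrable G (μ.prod ν') := by
    rw [← hmp.integrable_comp_emb e.measurableEmbedding]
    have : (G ∘ e) = fun x : Fin (n + 1) → Fin d → ℝ =>
        (TFlin D n l (promptX d D n x fun i => f (x i.castSucc)) (Fin.last D) (Fin.last n)
          + f (x (Fin.last n))) ^ 2 := funext fun x => (hcomp x).symm
    rw [this]
    exact hInt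
  have hRHS : ∫ x, (TFlin D n l (promptX d D n x fun i => f (x i.castSucc))
        (Fin.last D) (Fin.last n) + f (x (Fin.last n))) ^ 2 ∂ν
      = ∫ p, G p ∂(μ.prod ν') := by
    rw [← hmp.integral_comp e.measurableEmbedding G]
    exact integral_congr_ae (Filter.Eventually.of_forall fun x => hcomp x)
  -- the best-linear-error functional
  set I : ℝ → (Fin d → ℝ) → ℝ := fun α β => ∫ y, (y ⬝ᵥ β + α + f y) ^ 2 ∂μ with hIdef
  have hInonneg : ∀ α β, 0 ≤ I α β := fun α β => integral_nonneg fun y => sq_nonneg _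
  have hciInf : ∀ u : Fin n → Fin d → ℝ,
      (⨅ α : ℝ, ⨅ β : Fin d → ℝ, I α β) ≤ I (aF u) (bF u) := by
    intro u
    have hbdd1 : BddBelow (Set.range fun α : ℝ => ⨅ β : Fin d → ℝ, I α β) := by
      refine ⟨0, fun r hr => ?_⟩
      obtain ⟨α, rfl⟩ := hr
      exact Real.iInf_nonneg fun β => hInonneg α β
    have hbdd2 : BddBelow (Set.range fun β : Fin d → ℝ => I (aF u) β) := by
      refine ⟨0, fun r hr => ?_⟩
      obtain ⟨β, rfl⟩ := hr
      exact hInonneg _ β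
    calc (⨅ α : ℝ, ⨅ β : Fin d → ℝ, I α β) ≤ ⨅ β : Fin d → ℝ, I (aF u) β :=
          ciInf_le hbdd1 (aF u)
      _ ≤ I (aF u) (bF u) := ciInf_le hbdd2 (bF u)
  have hprod : ∫ p, G p ∂(μ.prod ν') = ∫ u, (∫ y, G (y, u) ∂μ) ∂ν' :=
    integral_prod_symm G hIntG
  have hIntInner : Integrable (fun u => ∫ y, G (y, u) ∂μ) ν' := hIntG.integral_prod_right
  have hlow : (⨅ α : ℝ, ⨅ β : Fin d → ℝ, I α β) ≤ ∫ u, (∫ y, G (y, u) ∂μ) ∂ν' := by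
    have hconst : (⨅ α : ℝ, ⨅ β : Fin d → ℝ, I α β)
        = ∫ _u : Fin n → Fin d → ℝ, (⨅ α : ℝ, ⨅ β : Fin d → ℝ, I α β) ∂ν' := by
      rw [integral_const, probReal_univ, one_smul]
    rw [hconst]
    refine integral_mono (integrable_const _) hIntInner fun u => ?_
    exact hciInf u
  -- reduce the LHS to I
  have hmarg : ∀ h : (Fin d → ℝ) → ℝ, Measurable h →
      ∫ x, h (x (Fin.last n)) ∂ν = ∫ y, h y ∂μ := by
    intro h hh
    have h1 : ∫ x, h (x (Fin.last n)) ∂ν = ∫ p, h p.1 ∂(μ.prod ν') := by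
      rw [← hmp.integral_comp e.measurableEmbedding (fun p => h p.1)]
      refine integral_congr_ae (Filter.Eventually.of_forall fun x => ?_)
      show h (x (Fin.last n)) = h ((e x).1)
      rw [hex x]
    rw [h1]
    rw [← integral_map measurable_fst.aemeasurable hh.aestronglyMeasurable,
      Measure.map_fst_prod, measure_univ, one_smul]
  have hLHSeq : ∀ (α : ℝ) (β : Fin d → ℝ),
      (∫ x, ((x (Fin.last n) ⬝ᵥ β) + α + f (x (Fin.last n))) ^ 2 ∂ν) = I α β := by
    intro α β
    have hmeas : Measurable (fun y : Fin d → ℝ => (y ⬝ᵥ β + α + f y) ^ 2) := by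
      have hdot : Measurable (fun y : Fin d → ℝ => y ⬝ᵥ β) :=
        Finset.measurable_sum Finset.univ fun jj _ => (measurable_pi_apply jj).mul_const _
      exact ((hdot.add_const α).add hf).pow_const 2
    exact hmarg (fun y => (y ⬝ᵥ β + α + f y) ^ 2) hmeas
  calc (⨅ α : ℝ, ⨅ β : Fin d → ℝ,
        ∫ x, ((x (Fin.last n) ⬝ᵥ β) + α + f (x (Fin.last n))) ^ 2 ∂ν)
      = ⨅ α : ℝ, ⨅ β : Fin d → ℝ, I α β := by
        refine iInf_congr fun α => iInf_congr fun β => hLHSeq α β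
    _ ≤ ∫ u, (∫ y, G (y, u) ∂μ) ∂ν' := hlow
    _ = ∫ p, G p ∂(μ.prod ν') := hprod.symm
    _ = ∫ x, (TFlin D n l (promptX d D n x fun i => f (x i.castSucc))
          (Fin.last D) (Fin.last n) + f (x (Fin.last n))) ^ 2 ∂ν := hRHS.symm
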